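/- Let f: ℝ^{nd} → ℝ be convex, W symmetric positive semidefinite, λ > 0, and F(x) = f(x) + (λ/2)⟨x, Wx⟩. Let x* be a minimizer of f over {x : √W x = 0} with Lagrange multiplier y* (so x* minimizes x ↦ f(x) − ⟨y*, √W x⟩ globally). Let x_F* be a minimizer of F. If x^N satisfies F(x^N) − F(x_F*) ≤ ε, then f(x^N) − f(x*) ≤ ε and ‖√W x^N‖₂ ≤ 2‖y*‖₂/λ + √(2ε/λ). -/

import Mathlib

open Matrix

open scoped ComplexOrder in
/-- The positive semidefinite square root of a positive semidefinite matrix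
(definition as in Mathlib of December 2024, since removed). -/
noncomputable def Matrix.PosSemidef.sqrt {n : Type*} {𝕜 : Type*} [Fintype n] [RCLike 𝕜]
    [DecidableEq n] {A : Matrix n n 𝕜} (hA : A.PosSemidef) : Matrix n n 𝕜 :=
  hA.1.eigenvectorUnitary.1 * diagonal ((↑) ∘ (hA.1.eigenvalues · |>.sqrt))
    * (star hA.1.eigenvectorUnitary : Matrix n n 𝕜)

lemma Matrix.PosSemidef.posSemidef_sqrt {n : Type*} [Fintype n] [DecidableEq n]
    {A : Matrix n n ℝ} (hA : A.PosSemidef) : PosSemidef hA.sqrt := by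
  unfold Matrix.PosSemidef.sqrt
  have h := (posSemidef_diagonal_iff (R := ℝ) (n := n)
    (d := ((↑) ∘ (hA.1.eigenvalues · |>.sqrt)))).mpr fun i => by
      simp only [Function.comp_apply, RCLike.ofReal_real_eq_id, id]
      exact Real.sqrt_nonneg _
  have := h.mul_mul_conjTranspose_same (hA.1.eigenvectorUnitary : Matrix n n ℝ)
  simpa [Matrix.star_eq_conjTranspose, Function.comp_def] using this

lemma Matrix.PosSemidef.sqrt_mul_self {n : Type*} [Fintype n] [DecidableEq n]
    {A : Matrix n n ℝ} (hA : A.PosSemidef) : hA.sqrt * hA.sqrt = A := by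
  set C : Matrix n n ℝ := hA.1.eigenvectorUnitary.1 with hC
  set E : Matrix n n ℝ := diagonal (RCLike.ofReal ∘ (hA.1.eigenvalues · |>.sqrt)) with hE
  have hCC : star C * C = 1 := Unitary.star_mul_self_of_mem hA.1.eigenvectorUnitary.2
  have h1 : hA.sqrt * hA.sqrt = C * (E * (star C * C) * E) * star C := by
    show (C * E * star C) * (C * E * star C) = _
    simp only [Matrix.mul_assoc]
  rw [h1, hCC, Matrix.mul_one, diagonal_mul_diagonal]
  conv_rhs => rw [hA.1.spectral_theorem, Unitary.conjStarAlgAut_apply]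
  congr 3
  funext i
  simp only [Function.comp_apply, RCLike.ofReal_real_eq_id, id]
  exact Real.mul_self_sqrt (hA.eigenvalues_nonneg i)

/-- Constraint gap theorem: an `ε`-minimizer `x^N` of the penalized objective
`F(x) = f(x) + (λ/2)⟨x, Wx⟩` satisfies `f(x^N) − f(x*) ≤ ε` and
`‖√W x^N‖ ≤ 2‖y*‖/λ + √(2ε/λ)`. -/
theorem stmt5 {N : ℕ} (f : (Fin N → ℝ) → ℝ) (hf : ConvexOn ℝ Set.univ f)
    (W : Matrix (Fin N) (Fin N) ℝ) (hW : W.PosSemidef)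
    (lam ε : ℝ) (hlam : 0 < lam) (hε : 0 < ε)
    (xstar ystar xF xN : Fin N → ℝ)
    (hfeas : hW.sqrt.mulVec xstar = 0)
    (hlag : ∀ x : Fin N → ℝ,
      f xstar - ystar ⬝ᵥ hW.sqrt.mulVec xstar ≤ f x - ystar ⬝ᵥ hW.sqrt.mulVec x)
    (hxF : ∀ y : Fin N → ℝ,
      f xF + lam / 2 * (xF ⬝ᵥ W.mulVec xF) ≤ f y + lam / 2 * (y ⬝ᵥ W.mulVec y))
    (hN : f xN + lam / 2 * (xN ⬝ᵥ W.mulVec xN)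
        - (f xF + lam / 2 * (xF ⬝ᵥ W.mulVec xF)) ≤ ε) :
    f xN - f xstar ≤ ε ∧
    Real.sqrt (hW.sqrt.mulVec xN ⬝ᵥ hW.sqrt.mulVec xN) ≤
      2 * Real.sqrt (ystar ⬝ᵥ ystar) / lam + Real.sqrt (2 * ε / lam) := by
  have hSS : hW.sqrt * hW.sqrt = W := hW.sqrt_mul_self
  have hSym : hW.sqrtᵀ = hW.sqrt := by
    have h := hW.posSemidef_sqrt.isHermitian
    simpa [Matrix.IsHermitian, Matrix.conjTranspose_eq_transpose_of_trivial] using h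
  have hWsplit : ∀ x, W.mulVec x = hW.sqrt.mulVec (hW.sqrt.mulVec x) := by
    intro x
    rw [Matrix.mulVec_mulVec, hSS]
  have quad : ∀ x, x ⬝ᵥ W.mulVec x = hW.sqrt.mulVec x ⬝ᵥ hW.sqrt.mulVec x := by
    intro x
    rw [hWsplit, dotProduct_mulVec, ← Matrix.mulVec_transpose, hSym]
  have hWx0 : W.mulVec xstar = 0 := by
    rw [hWsplit, hfeas, Matrix.mulVec_zero]
  have hq_nonneg : 0 ≤ xN ⬝ᵥ W.mulVec xN := by
    rw [quad]
    exact Finset.sum_nonneg fun i _ => mul_self_nonneg _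
  have hFstar : f xN + lam / 2 * (xN ⬝ᵥ W.mulVec xN) ≤ f xstar + ε := by
    have h := hxF xstar
    rw [hWx0, dotProduct_zero] at h
    simp only [mul_zero, add_zero] at h
    linarith
  have hfirst : f xN - f xstar ≤ ε := by nlinarith
  refine ⟨hfirst, ?_⟩
  set a := hW.sqrt.mulVec xN with ha
  set t := Real.sqrt (a ⬝ᵥ a) with htdef
  set s := Real.sqrt (ystar ⬝ᵥ ystar) with hsdef
  set u := Real.sqrt (2 * ε / lam) with hudef
  have ht0 : 0 ≤ t := Real.sqrt_nonneg _
  have hs0 : 0 ≤ s := Real.sqrt_nonneg _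
  have hu0 : 0 < u := Real.sqrt_pos.2 (by positivity)
  have ht2 : t ^ 2 = a ⬝ᵥ a := Real.sq_sqrt (by rw [← quad]; exact hq_nonneg)
  have hu2 : u ^ 2 = 2 * ε / lam := Real.sq_sqrt (by positivity)
  -- Cauchy-Schwarz : -(ystar ⬝ᵥ a) ≤ s * t
  have hCS : -(ystar ⬝ᵥ a) ≤ s * t := by
    have h := Real.sum_mul_le_sqrt_mul_sqrt Finset.univ (fun i => -ystar i) a
    have e1 : ∑ i, -ystar i * a i = -(ystar ⬝ᵥ a) := by
      simp [dotProduct]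
    have e2 : ∑ i, (-ystar i) ^ 2 = ystar ⬝ᵥ ystar := by
      simp [dotProduct, sq]
    have e3 : ∑ i, a i ^ 2 = a ⬝ᵥ a := by
      simp [dotProduct, sq]
    simp only [e1, e2, e3] at h
    exact h
  -- Lagrange
  have hL : f xstar ≤ f xN - ystar ⬝ᵥ a := by
    have h := hlag xN
    rw [hfeas, dotProduct_zero] at h
    linarith
  have hq : lam / 2 * t ^ 2 ≤ s * t + ε := by
    rw [ht2, ← quad]
    linarith
  have hlu2 : lam * u ^ 2 = 2 * ε := by
    rw [hu2]; field_simp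
  have key2 : lam * t ≤ 2 * s + lam * u := by
    nlinarith [hlu2, mul_nonneg hs0 ht0, mul_nonneg hs0 hu0.le,
      add_pos_of_nonneg_of_pos ht0 hu0, mul_pos hlam hu0]
  calc t ≤ (2 * s + lam * u) / lam := (le_div_iff₀ hlam).2 (by linarith)
    _ = 2 * s / lam + u := by field_simp
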